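/- Let n₁ ≥ n₂ ≥ … ≥ n_r be positive integers summing to n with n₁ − n_r ≥ 2, and let K = K(n₁,…,n_r) be the complete r-partite graph with these part sizes. Then there is a constant γ > 0 (depending only on r) such that ρ(T_{n,r}) − ρ(K) ≥ γ/n for all sufficiently large n. -/

import Mathlib

open SimpleGraph Finset
open Matrix

/-- The spectral radius (largest adjacency eigenvalue) of a graph. -/
noncomputable def specRad {V : Type*} [Fintype V] [DecidableEq V] (G : SimpleGraph V) : ℝ := by
  classical
  have h : (G.adjMatrix ℝ).IsHermitian := by
    rw [Matrix.IsHermitian, Matrix.conjTranspose_eq_transpose_of_trivial]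
    exact G.isSymm_adjMatrix
  exact ⨆ i, h.eigenvalues i

noncomputable def psi (x : ℝ) (t : ℕ) : ℝ := (t : ℝ)/(x + t)

noncomputable def gsum {r : ℕ} (f : Fin r → ℕ) (x : ℝ) : ℝ := ∑ i, psi x (f i)

noncomputable def Hbal (n r : ℕ) (x : ℝ) : ℝ :=
  ((r - n % r : ℕ) : ℝ) * psi x (n/r) + ((n % r : ℕ) : ℝ) * psi x (n/r + 1)

def cnt (n r i : ℕ) : ℕ := ((Finset.range n).filter (fun x => x % r = i)).card

section Spectral
variable {V : Type*} [Fintype V] [DecidableEq V]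

omit [Fintype V] [DecidableEq V] in
lemma adjMatrix_hermitian (G : SimpleGraph V) [Fintype V] [DecidableEq V] [DecidableRel G.Adj] :
    (G.adjMatrix ℝ).IsHermitian := by
  rw [Matrix.IsHermitian, Matrix.conjTranspose_eq_transpose_of_trivial]
  exact G.isSymm_adjMatrix

lemma specRad_eq_iSup (G : SimpleGraph V) [inst : DecidableRel G.Adj] :
    specRad G = ⨆ i, (adjMatrix_hermitian G).eigenvalues i := by
  unfold specRad
  have e : (fun a b => Classical.propDecidable (G.Adj a b)) = inst := Subsingleton.elim _ _
  congr!

variable [Nonempty V]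

lemma eig_le_of_subinvariant (A : Matrix V V ℝ) (hA : A.IsHermitian)
    (hApos : ∀ v w, 0 ≤ A v w) (y : V → ℝ) (hy : ∀ v, 0 < y v) (lam : ℝ)
    (h : ∀ v, (A *ᵥ y) v ≤ lam * y v) (i : V) : hA.eigenvalues i ≤ lam := by
  set μ := hA.eigenvalues i with hμ
  set x : V → ℝ := ⇑(hA.eigenvectorBasis i) with hxdef
  have hx : A *ᵥ x = μ • x := hA.mulVec_eigenvectorBasis i
  have hx0 : x ≠ 0 := (WithLp.ofLp_eq_zero 2).ne.2 <| hA.eigenvectorBasis.orthonormal.ne_zero i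
  obtain ⟨v, -, hv⟩ := Finset.exists_max_image Finset.univ (fun w => |x w| / y w)
    (Finset.univ_nonempty)
  set c := |x v| / y v with hc
  have hcpos : 0 < c := by
    obtain ⟨w, hw⟩ : ∃ w, x w ≠ 0 := Function.ne_iff.mp hx0
    have h1 : 0 < |x w| / y w := div_pos (abs_pos.mpr hw) (hy w)
    exact lt_of_lt_of_le h1 (hv w (Finset.mem_univ w))
  have hbound : ∀ w, |x w| ≤ c * y w := by
    intro w
    have h2 := hv w (Finset.mem_univ w)
    rw [div_le_div_iff₀ (hy w) (hy v)] at h2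
    rw [hc, div_mul_eq_mul_div, le_div_iff₀ (hy v)]
    linarith
  have hcy : c * y v = |x v| := by
    rw [hc, div_mul_cancel₀ _ (hy v).ne']
  set t : V → ℝ := if 0 ≤ x v then x else -x with ht
  have htx : A *ᵥ t = μ • t := by
    by_cases hcase : 0 ≤ x v <;> simp [ht, hcase, hx, Matrix.mulVec_neg, smul_neg]
  have htv : t v = |x v| := by
    by_cases hcase : 0 ≤ x v
    · simp [ht, hcase, abs_of_nonneg hcase]
    · simp [ht, hcase, abs_of_neg (lt_of_not_ge hcase)]
  have htb : ∀ w, t w ≤ c * y w := by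
    intro w
    have h3 : t w ≤ |x w| := by
      by_cases hcase : 0 ≤ x v <;> simp [ht, hcase]
      · exact le_abs_self _
      · exact neg_le_abs _
    exact h3.trans (hbound w)
  have key : μ * (c * y v) ≤ lam * (c * y v) := by
    have e1 : μ * (c * y v) = (A *ᵥ t) v := by
      rw [htx, hcy]; simp [Pi.smul_apply, htv]
    have e2 : (A *ᵥ t) v ≤ c * (A *ᵥ y) v := by
      simp only [Matrix.mulVec, dotProduct]
      rw [Finset.mul_sum]
      apply Finset.sum_le_sum
      intro w _
      calc A v w * t w ≤ A v w * (c * y w) :=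
            mul_le_mul_of_nonneg_left (htb w) (hApos v w)
      _ = c * (A v w * y w) := by ring
    have e3 : c * (A *ᵥ y) v ≤ c * (lam * y v) :=
      mul_le_mul_of_nonneg_left (h v) hcpos.le
    calc μ * (c * y v) = (A *ᵥ t) v := e1
    _ ≤ c * (lam * y v) := e2.trans e3
    _ = lam * (c * y v) := by ring
  have hpos : 0 < c * y v := mul_pos hcpos (hy v)
  exact le_of_mul_le_mul_right (by linarith [key]) hpos

omit [Nonempty V] in
lemma exists_le_eig (A : Matrix V V ℝ) (hA : A.IsHermitian)
    (z : V → ℝ) (hz : z ≠ 0) (μ : ℝ)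
    (h : μ * (z ⬝ᵥ z) ≤ z ⬝ᵥ (A *ᵥ z)) : ∃ i, μ ≤ hA.eigenvalues i := by
  classical
  set U : Matrix V V ℝ := (hA.eigenvectorUnitary : Matrix V V ℝ) with hU
  have hU1 : U * star U = 1 := (Matrix.mem_unitaryGroup_iff).mp hA.eigenvectorUnitary.2
  set w : V → ℝ := (star U) *ᵥ z with hw
  have hzw : z = U *ᵥ w := by
    rw [hw, Matrix.mulVec_mulVec, hU1, Matrix.one_mulVec]
  have hw0 : w ≠ 0 := by
    intro h0
    apply hz
    rw [hzw, h0, Matrix.mulVec_zero]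
  have hstar : star U = Uᵀ := by
    rw [Matrix.star_eq_conjTranspose, Matrix.conjTranspose_eq_transpose_of_trivial]
  have hwU : z ᵥ* U = w := by
    rw [hw, hstar, Matrix.mulVec_transpose]
  have hdot : ∀ u : V → ℝ, z ⬝ᵥ (U *ᵥ u) = w ⬝ᵥ u := by
    intro u
    rw [dotProduct_mulVec, hwU]
  have hzz : z ⬝ᵥ z = w ⬝ᵥ w := by
    calc z ⬝ᵥ z = z ⬝ᵥ (U *ᵥ w) := by rw [← hzw]
    _ = w ⬝ᵥ w := hdot w
  have hAz : z ⬝ᵥ (A *ᵥ z) = ∑ i, hA.eigenvalues i * (w i)^2 := by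
    conv_lhs => rw [hA.spectral_theorem, Unitary.conjStarAlgAut_apply, ← hU]
    rw [← Matrix.mulVec_mulVec, ← Matrix.mulVec_mulVec, hdot, ← hw]
    simp only [dotProduct, Matrix.mulVec_diagonal, Function.comp_apply,
      RCLike.ofReal_real_eq_id, id_eq]
    apply Finset.sum_congr rfl
    intro i _
    ring
  by_contra hcon
  push_neg at hcon
  obtain ⟨j, hj⟩ : ∃ j, w j ≠ 0 := Function.ne_iff.mp hw0
  have hlt : ∑ i, hA.eigenvalues i * (w i)^2 < ∑ i, μ * (w i)^2 := by
    apply Finset.sum_lt_sum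
    · intro i _
      nlinarith [(hcon i).le, sq_nonneg (w i)]
    · refine ⟨j, Finset.mem_univ j, ?_⟩
      have hsq : 0 < (w j)^2 := lt_of_le_of_ne (sq_nonneg _) (Ne.symm (pow_ne_zero 2 hj))
      exact mul_lt_mul_of_pos_right (hcon j) hsq
  have heq : ∑ i, μ * (w i)^2 = μ * (z ⬝ᵥ z) := by
    rw [hzz]
    simp only [dotProduct, Finset.mul_sum]
    apply Finset.sum_congr rfl; intro i _; ring
  rw [hAz] at h
  linarith

lemma specRad_le (G : SimpleGraph V) [DecidableRel G.Adj] (y : V → ℝ) (hy : ∀ v, 0 < y v)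
    (lam : ℝ) (h : ∀ v, (∑ w, if G.Adj v w then y w else 0) ≤ lam * y v) :
    specRad G ≤ lam := by
  rw [specRad_eq_iSup]
  apply ciSup_le
  intro i
  apply eig_le_of_subinvariant _ _ _ y hy lam _ i
  · intro v w
    rw [SimpleGraph.adjMatrix_apply]
    split_ifs <;> norm_num
  · intro v
    have e : ((G.adjMatrix ℝ) *ᵥ y) v = ∑ w, if G.Adj v w then y w else 0 := by
      simp only [Matrix.mulVec, dotProduct, SimpleGraph.adjMatrix_apply, ite_mul,
        one_mul, zero_mul]
    rw [e]
    exact h v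

lemma le_specRad (G : SimpleGraph V) [DecidableRel G.Adj] (z : V → ℝ) (hz : z ≠ 0) (μ : ℝ)
    (h : μ * (z ⬝ᵥ z) ≤ ∑ v, ∑ w, if G.Adj v w then z v * z w else 0) :
    μ ≤ specRad G := by
  rw [specRad_eq_iSup]
  have hAz : z ⬝ᵥ ((G.adjMatrix ℝ) *ᵥ z) = ∑ v, ∑ w, if G.Adj v w then z v * z w else 0 := by
    simp only [Matrix.mulVec, dotProduct, SimpleGraph.adjMatrix_apply, ite_mul,
      one_mul, zero_mul, Finset.mul_sum, mul_ite, mul_zero]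
  obtain ⟨i, hi⟩ := exists_le_eig (G.adjMatrix ℝ) (adjMatrix_hermitian G) z hz μ
    (by rw [hAz]; exact h)
  exact le_ciSup_of_le (Set.Finite.bddAbove (Set.finite_range _)) i hi

end Spectral

lemma step_core (x A B N : ℝ) (hx : 0 < x) (hB : 0 ≤ B) (hAB : B + 2 ≤ A) (hA : A ≤ N) :
    A/(x+A) + B/(x+B) + 2*x^2/(x+N)^4 ≤ (A-1)/(x+(A-1)) + (B+1)/(x+(B+1)) := by
  have h1 : 0 < x + B := by linarith
  have h2 : 0 < x + (B+1) := by linarith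
  have h3 : 0 < x + (A-1) := by linarith
  have h4 : 0 < x + A := by linarith
  have h5 : 0 < x + N := by linarith
  have d1 : (B+1)/(x+(B+1)) - B/(x+B) = x/((x+B)*(x+(B+1))) := by field_simp; ring
  have d2 : A/(x+A) - (A-1)/(x+(A-1)) = x/((x+(A-1))*(x+A)) := by field_simp; ring
  have key : x/((x+(A-1))*(x+A)) + 2*x^2/(x+N)^4 ≤ x/((x+B)*(x+(B+1))) := by
    set D1 := (x+B)*(x+(B+1)) with hD1def
    set D2 := (x+(A-1))*(x+A) with hD2def
    have hD1 : 0 < D1 := mul_pos h1 h2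
    have hD2 : 0 < D2 := mul_pos h3 h4
    have hgap : D1 + 2*x ≤ D2 := by nlinarith
    have hD1N : D1 ≤ (x+N)^2 := by nlinarith
    have hD2N : D2 ≤ (x+N)^2 := by nlinarith
    have hDN : D1 * D2 ≤ (x+N)^4 := by nlinarith [sq_nonneg (x+N)]
    have e : x/D1 - x/D2 = x*(D2 - D1)/(D1*D2) := by field_simp
    have hle : 2*x^2/(x+N)^4 ≤ x*(D2-D1)/(D1*D2) := by
      apply div_le_div₀ (by nlinarith) (by nlinarith) (mul_pos hD1 hD2) hDN
    linarith
  linarith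

lemma step_weak (x A B : ℝ) (hx : 0 < x) (hB : 0 ≤ B) (hAB : B + 2 ≤ A) :
    A/(x+A) + B/(x+B) ≤ (A-1)/(x+(A-1)) + (B+1)/(x+(B+1)) := by
  have h4 : 0 < x + A := by linarith
  have h5 : 0 < (x+A)^4 := pow_pos h4 4
  have h6 : 0 ≤ 2*x^2/(x+A)^4 := div_nonneg (by positivity) h5.le
  linarith [step_core x A B A hx hB hAB le_rfl]

lemma sum_update2 {r : ℕ} {β : Type*} [AddCommMonoid β] (F : ℕ → β) (f : Fin r → ℕ)
    {i j : Fin r} (hij : j ≠ i) (a b : ℕ) :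
    (∑ k, F ((Function.update (Function.update f i a) j b) k)) + F (f i) + F (f j)
      = F a + F b + ∑ k, F (f k) := by
  classical
  have e1 : (fun k => F ((Function.update (Function.update f i a) j b) k))
      = Function.update (Function.update (fun k => F (f k)) i (F a)) j (F b) := by
    funext k
    by_cases h1 : k = j
    · subst h1; simp
    · by_cases h2 : k = i
      · subst h2; simp [Function.update_of_ne h1, Function.update_of_ne hij]
      · simp [Function.update_of_ne h1, Function.update_of_ne h2]
  have hi' : i ∈ Finset.univ \ {j} := by
    simp only [Finset.mem_sdiff, Finset.mem_univ, Finset.mem_singleton, true_and]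
    exact fun h => hij h.symm
  rw [e1]
  rw [Finset.sum_update_of_mem (Finset.mem_univ j)]
  rw [Finset.sum_update_of_mem hi']
  have e2 : (∑ k, F (f k)) = (∑ k ∈ (Finset.univ \ {j}) \ {i}, F (f k)) + F (f i) + F (f j) := by
    conv_lhs => rw [Finset.sum_eq_sum_sdiff_singleton_add (Finset.mem_univ j) (fun k => F (f k))]
    rw [Finset.sum_eq_sum_sdiff_singleton_add hi' (fun k => F (f k))]
  rw [e2]
  abel

lemma gsum_balanced {r n : ℕ} (hr : 0 < r) (v : Fin r → ℕ) (hsum : ∑ i, v i = n)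
    (hbal : ∀ i j, v i ≤ v j + 1) (x : ℝ) : gsum v x = Hbal n r x := by
  classical
  have : Nonempty (Fin r) := ⟨⟨0, hr⟩⟩
  obtain ⟨jmin, -, hmin⟩ := Finset.exists_min_image Finset.univ v Finset.univ_nonempty
  set k := v jmin with hk
  have hall : ∀ i, v i = k ∨ v i = k + 1 := by
    intro i
    have h1 := hmin i (Finset.mem_univ i)
    have h2 := hbal i jmin
    omega
  set s := (Finset.univ.filter (fun i => v i = k+1)).card with hs
  have hcards : s + (Finset.univ.filter (fun i => ¬ (v i = k+1))).card = r := by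
    rw [hs, Finset.card_filter_add_card_filter_not]
    simp
  have hsum2 : n = s * (k+1) + (r - s) * k := by
    rw [← hsum, ← Finset.sum_filter_add_sum_filter_not Finset.univ (fun i => v i = k+1) v]
    have c1 : ∑ i ∈ Finset.univ.filter (fun i => v i = k+1), v i = s * (k+1) := by
      rw [Finset.sum_congr rfl (fun i hi => (Finset.mem_filter.mp hi).2), Finset.sum_const,
        smul_eq_mul]
    have c2 : ∑ i ∈ Finset.univ.filter (fun i => ¬ (v i = k+1)), v i
        = (r - s) * k := by
      have : ∀ i ∈ Finset.univ.filter (fun i => ¬ (v i = k+1)), v i = k := by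
        intro i hi
        have := (Finset.mem_filter.mp hi).2
        rcases hall i with h | h <;> omega
      rw [Finset.sum_congr rfl this, Finset.sum_const, smul_eq_mul]
      congr 1
      omega
    rw [c1, c2]
  have hslt : s < r := by
    have hjm : jmin ∉ Finset.univ.filter (fun i => v i = k+1) := by
      simp only [Finset.mem_filter, Finset.mem_univ, true_and]
      omega
    have hne : (Finset.univ.filter (fun i => v i = k+1)) ≠ Finset.univ := by
      intro h
      have := Finset.mem_univ jmin
      rw [← h] at this
      exact hjm this
    have := Finset.card_lt_card (lt_of_le_of_ne (Finset.subset_univ _) hne)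
    simpa using this
  have hdm : n / r = k ∧ n % r = s := by
    rw [Nat.div_mod_unique hr]
    have e3 : (r - s) * k = r*k - s*k := by
      rw [Nat.sub_mul]
    have e4 : s * (k+1) = s*k + s := Nat.mul_succ s k
    have e5 : s*k ≤ r*k := Nat.mul_le_mul_right k hslt.le
    exact ⟨by omega, hslt⟩
  have hgs : gsum v x = (s : ℝ) * psi x (k+1) + ((r - s : ℕ) : ℝ) * psi x k := by
    unfold gsum
    rw [← Finset.sum_filter_add_sum_filter_not Finset.univ (fun i => v i = k+1)
      (fun i => psi x (v i))]
    have c1 : ∑ i ∈ Finset.univ.filter (fun i => v i = k+1), psi x (v i)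
        = (s : ℝ) * psi x (k+1) := by
      rw [Finset.sum_congr rfl (fun i hi => by rw [(Finset.mem_filter.mp hi).2]),
        Finset.sum_const, nsmul_eq_mul]
    have c2 : ∑ i ∈ Finset.univ.filter (fun i => ¬ (v i = k+1)), psi x (v i)
        = ((r - s : ℕ) : ℝ) * psi x k := by
      have hv : ∀ i ∈ Finset.univ.filter (fun i => ¬ (v i = k+1)), psi x (v i) = psi x k := by
        intro i hi
        have := (Finset.mem_filter.mp hi).2
        rcases hall i with h | h
        · rw [h]
        · omega
      rw [Finset.sum_congr rfl hv, Finset.sum_const, nsmul_eq_mul]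
      congr 2
      omega
    rw [c1, c2]
  rw [hgs]
  unfold Hbal
  rw [hdm.1, hdm.2]
  ring

lemma psi_pred (x : ℝ) {a : ℕ} (ha : 1 ≤ a) :
    psi x (a - 1) = ((a:ℝ)-1)/(x + ((a:ℝ)-1)) := by
  unfold psi
  rw [Nat.cast_sub ha]
  norm_num

lemma psi_succ (x : ℝ) (b : ℕ) :
    psi x (b + 1) = ((b:ℝ)+1)/(x + ((b:ℝ)+1)) := by
  unfold psi
  push_cast
  ring_nf

lemma gsum_transfer {r : ℕ} (v : Fin r → ℕ) {i j : Fin r} (hij : j ≠ i)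
    (h : v j + 2 ≤ v i) (x : ℝ) (hx : 0 < x) :
    gsum v x ≤ gsum (Function.update (Function.update v i (v i - 1)) j (v j + 1)) x := by
  have key := sum_update2 (psi x) v hij (v i - 1) (v j + 1)
  have hstep := step_weak x (v i) (v j) hx (Nat.cast_nonneg _) (by exact_mod_cast h)
  rw [psi_pred x (by omega : 1 ≤ v i), psi_succ x (v j)] at key
  have e1 : psi x (v i) = (v i : ℝ)/(x + (v i : ℝ)) := rfl
  have e2 : psi x (v j) = (v j : ℝ)/(x + (v j : ℝ)) := rfl
  rw [e1, e2] at key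
  unfold gsum
  linarith [key, hstep]

lemma nat_sq_step (a b : ℕ) (h : b + 2 ≤ a) : (a-1)^2 + (b+1)^2 + 2 ≤ a^2 + b^2 := by
  obtain ⟨c, rfl⟩ : ∃ c, a = b + 2 + c := ⟨a - b - 2, by omega⟩
  have e : b + 2 + c - 1 = b + 1 + c := by omega
  rw [e]
  nlinarith [sq_nonneg (b:ℤ)]

lemma gsum_le_Hbal {r n : ℕ} (hr : 0 < r) (x : ℝ) (hx : 0 < x) :
    ∀ (M : ℕ) (v : Fin r → ℕ), (∑ i, (v i)^2) ≤ M → (∑ i, v i) = n →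
      gsum v x ≤ Hbal n r x := by
  intro M
  induction M with
  | zero =>
    intro v hM hsum
    have hz : ∀ i, v i = 0 := by
      intro i
      have h1 : (v i)^2 ≤ 0 := le_trans (Finset.single_le_sum
        (fun k _ => Nat.zero_le ((v k)^2)) (Finset.mem_univ i)) hM
      nlinarith [Nat.zero_le (v i)]
    exact le_of_eq (gsum_balanced hr v hsum (fun i j => by rw [hz i]; omega) x)
  | succ M ih =>
    intro v hM hsum
    by_cases hbal : ∀ i j, v i ≤ v j + 1
    · exact le_of_eq (gsum_balanced hr v hsum hbal x)
    · push_neg at hbal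
      obtain ⟨i, j, hij⟩ := hbal
      have hij2 : v j + 2 ≤ v i := by omega
      have hne : j ≠ i := by
        intro hh
        rw [hh] at hij2
        omega
      set v' := Function.update (Function.update v i (v i - 1)) j (v j + 1) with hv'
      have hs := sum_update2 (id) v hne (v i - 1) (v j + 1)
      simp only [id_eq] at hs
      have hsum' : ∑ k, v' k = n := by
        rw [← hv'] at hs
        omega
      have hq := sum_update2 (·^2) v hne (v i - 1) (v j + 1)
      have hM' : ∑ k, (v' k)^2 ≤ M := by
        rw [← hv'] at hq
        have := nat_sq_step (v i) (v j) hij2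
        omega
      exact le_trans (gsum_transfer v hne hij2 x hx) (ih v' hM' hsum')

lemma gsum_gap {r n : ℕ} (hr : 0 < r) (v : Fin r → ℕ) (hsum : ∑ i, v i = n)
    {i j : Fin r} (hne : j ≠ i) (hij : v j + 2 ≤ v i) (x : ℝ) (hx : 0 < x) :
    gsum v x + 2*x^2/(x + (n:ℝ))^4 ≤ Hbal n r x := by
  have hvi_le : v i ≤ n := by
    rw [← hsum]
    exact Finset.single_le_sum (fun k _ => Nat.zero_le (v k)) (Finset.mem_univ i)
  set v' := Function.update (Function.update v i (v i - 1)) j (v j + 1) with hv'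
  have key := sum_update2 (psi x) v hne (v i - 1) (v j + 1)
  rw [psi_pred x (by omega : 1 ≤ v i), psi_succ x (v j)] at key
  have hstep := step_core x (v i) (v j) n hx (Nat.cast_nonneg _)
    (by exact_mod_cast hij) (by exact_mod_cast hvi_le)
  have e1 : psi x (v i) = (v i : ℝ)/(x + (v i : ℝ)) := rfl
  have e2 : psi x (v j) = (v j : ℝ)/(x + (v j : ℝ)) := rfl
  have h1 : gsum v x + 2*x^2/(x + (n:ℝ))^4 ≤ gsum v' x := by
    rw [e1, e2] at key
    rw [← hv'] at key
    unfold gsum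
    linarith [key, hstep]
  have hs := sum_update2 (id) v hne (v i - 1) (v j + 1)
  simp only [id_eq] at hs
  have hsum' : ∑ k, v' k = n := by
    rw [← hv'] at hs
    omega
  exact le_trans h1 (gsum_le_Hbal hr x hx (∑ k, (v' k)^2) v' le_rfl hsum')

lemma cnt_succ (n r i : ℕ) : cnt (n+1) r i = cnt n r i + if n % r = i then 1 else 0 := by
  unfold cnt
  rw [Finset.range_add_one, Finset.filter_insert]
  split_ifs with h
  · rw [Finset.card_insert_of_notMem (by simp)]
  · rw [Nat.add_zero]

lemma cnt_formula {r : ℕ} (hr : 0 < r) (n i : ℕ) (hi : i < r) :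
    cnt n r i = n/r + if i < n % r then 1 else 0 := by
  induction n with
  | zero => simp [cnt]
  | succ n ih =>
    rw [cnt_succ, ih]
    have hmod : n % r < r := Nat.mod_lt _ hr
    have hdm := Nat.div_add_mod n r
    by_cases hc : n % r + 1 = r
    · have hdvd : r ∣ (n+1) := ⟨n/r + 1, by rw [Nat.mul_add, Nat.mul_one]; omega⟩
      have h1 : (n+1)/r = n/r + 1 := by
        rw [Nat.succ_div, if_pos hdvd]
      have h2 : (n+1) % r = 0 := by
        obtain ⟨k, hk⟩ := hdvd
        rw [hk, Nat.mul_mod_right]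
      rw [h1, h2]
      split_ifs <;> omega
    · have hdvd : ¬ r ∣ (n+1) := by
        intro ⟨k, hk⟩
        have h2 : (n+1) % r = 0 := by rw [hk, Nat.mul_mod_right]
        have := Nat.div_add_mod (n+1) r
        have h3 : (n+1)/r = n/r ∧ (n+1) % r = n % r + 1 := by
          rw [Nat.div_mod_unique hr]
          omega
        omega
      have h1 : (n+1)/r = n/r := by
        rw [Nat.succ_div, if_neg hdvd]
        omega
      have h3 : (n+1) % r = n % r + 1 := by
        have := (Nat.div_mod_unique hr (a := n+1) (d := n/r) (c := n % r + 1)).mpr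
          ⟨by omega, by omega⟩
        exact this.2
      rw [h1, h3]
      split_ifs <;> omega

lemma cnt_sum {r : ℕ} (hr : 0 < r) (n : ℕ) : ∑ i ∈ Finset.range r, cnt n r i = n := by
  unfold cnt
  rw [← Finset.card_eq_sum_card_fiberwise (f := fun x => x % r) (t := Finset.range r)
    (fun x _ => Finset.mem_range.mpr (Nat.mod_lt _ hr))]
  exact Finset.card_range n

lemma fin_sum_mod {n r : ℕ} (hr : 0 < r) (F : ℕ → ℝ) :
    ∑ v : Fin n, F (↑v % r) = ∑ i ∈ Finset.range r, (cnt n r i : ℝ) * F i := by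
  rw [Fin.sum_univ_eq_sum_range (fun x => F (x % r)) n]
  rw [← Finset.sum_fiberwise_of_maps_to (g := fun x => x % r) (t := Finset.range r)
    (fun x _ => Finset.mem_range.mpr (Nat.mod_lt _ hr)) (fun x => F (x % r))]
  apply Finset.sum_congr rfl
  intro i _
  rw [Finset.sum_congr rfl (fun x hx => by rw [(Finset.mem_filter.mp hx).2]),
    Finset.sum_const, nsmul_eq_mul]
  rfl

lemma fin_sum_fiber {n r : ℕ} (p : Fin n → Fin r) (f : Fin r → ℕ)
    (hp : ∀ i, (Finset.univ.filter (fun v => p v = i)).card = f i) (F : Fin r → ℝ) :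
    ∑ v : Fin n, F (p v) = ∑ i : Fin r, (f i : ℝ) * F i := by
  rw [← Finset.sum_fiberwise_of_maps_to (g := p) (t := Finset.univ)
    (fun x _ => Finset.mem_univ _) (fun v => F (p v))]
  apply Finset.sum_congr rfl
  intro i _
  rw [Finset.sum_congr rfl (fun x hx => by rw [(Finset.mem_filter.mp hx).2]),
    Finset.sum_const, nsmul_eq_mul, hp i]

lemma cnt_pos {n r : ℕ} (hr : 0 < r) (hn : r ≤ n) (i : ℕ) (hi : i < r) :
    1 ≤ cnt n r i := by
  have : i ∈ (Finset.range n).filter (fun x => x % r = i) := by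
    rw [Finset.mem_filter, Finset.mem_range]
    exact ⟨lt_of_lt_of_le hi hn, Nat.mod_eq_of_lt hi⟩
  exact Finset.card_pos.mpr ⟨i, this⟩

lemma cnt_le {n r : ℕ} (hr : 0 < r) (i : ℕ) (hi : i < r) :
    cnt n r i ≤ n/r + 1 := by
  rw [cnt_formula hr n i hi]
  split_ifs <;> omega

lemma exists_mu {n r : ℕ} (hr : 2 ≤ r) (hrn : r ≤ n) :
    ∃ μ : ℝ, (∑ i ∈ Finset.range r, psi μ (cnt n r i)) = 1 ∧
      0 < μ ∧ μ ≤ n ∧ (n : ℝ) - (n/r : ℕ) - 1 ≤ μ := by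
  have hr0 : 0 < r := by omega
  have hn0 : 0 < n := by omega
  have hc1 : ∀ i ∈ Finset.range r, 1 ≤ cnt n r i := fun i hi =>
    cnt_pos hr0 hrn i (Finset.mem_range.mp hi)
  have hc1' : ∀ i ∈ Finset.range r, (1:ℝ) ≤ (cnt n r i : ℝ) := fun i hi => by
    exact_mod_cast hc1 i hi
  set B : ℝ := (n : ℝ) * r with hB
  have hBpos : 0 < B := by positivity
  set g : ℝ → ℝ := fun x => ∑ i ∈ Finset.range r, psi x (cnt n r i) with hgdef
  have hcont : ContinuousOn g (Set.Icc 0 B) := by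
    apply continuousOn_finset_sum
    intro i hi
    unfold psi
    apply ContinuousOn.div continuousOn_const
    · exact (continuous_id.add continuous_const).continuousOn
    · intro x hx
      have h1 := hc1' i hi
      have h2 : 0 ≤ x := hx.1
      positivity
  have hcsum : (∑ i ∈ Finset.range r, (cnt n r i : ℝ)) = n := by
    rw [← Nat.cast_sum, cnt_sum hr0]
  have hg0 : g 0 = r := by
    rw [hgdef]
    simp only
    rw [Finset.sum_congr rfl (fun i hi => show psi 0 (cnt n r i) = 1 by
      unfold psi
      rw [zero_add, div_self (by linarith [hc1' i hi])])]
    rw [Finset.sum_const, Finset.card_range, nsmul_eq_mul, mul_one]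
  have hgB : g B < 1 := by
    have hstep : ∀ i ∈ Finset.range r, psi B (cnt n r i) ≤ (cnt n r i : ℝ)/B := by
      intro i hi
      unfold psi
      apply div_le_div_of_nonneg_left (Nat.cast_nonneg _) hBpos
      linarith [Nat.cast_nonneg (α := ℝ) (cnt n r i)]
    calc g B ≤ ∑ i ∈ Finset.range r, (cnt n r i : ℝ)/B := Finset.sum_le_sum hstep
    _ = (n : ℝ)/B := by rw [← Finset.sum_div, hcsum]
    _ = 1/(r:ℝ) := by
        rw [hB]
        field_simp
    _ < 1 := by
        rw [div_lt_one (by positivity : (0:ℝ) < (r:ℝ))]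
        exact_mod_cast hr.trans_lt' one_lt_two
  have hmem : (1:ℝ) ∈ Set.Icc (g B) (g 0) := by
    constructor
    · exact hgB.le
    · rw [hg0]; exact_mod_cast Nat.one_le_iff_ne_zero.mpr (by omega)
  obtain ⟨μ, hμmem, hgμ⟩ := intermediate_value_Icc' hBpos.le hcont hmem
  have hμ0 : 0 ≤ μ := hμmem.1
  have hgμ' : ∑ i ∈ Finset.range r, psi μ (cnt n r i) = 1 := hgμ
  -- positivity of μ
  have hterm1 : ∀ i ∈ Finset.range r, 1/(μ+1) ≤ psi μ (cnt n r i) := by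
    intro i hi
    unfold psi
    have h1 := hc1' i hi
    rw [div_le_div_iff₀ (by linarith) (by linarith)]
    nlinarith
  have hr_le : (r:ℝ)/(μ+1) ≤ 1 := by
    have := Finset.sum_le_sum hterm1
    rw [Finset.sum_const, Finset.card_range, nsmul_eq_mul, hgμ'] at this
    calc (r:ℝ)/(μ+1) = (r:ℝ) * (1/(μ+1)) := by ring
    _ ≤ 1 := this
  have hμpos : 0 < μ := by
    have h2 : (2:ℝ) ≤ r := by exact_mod_cast hr
    rw [div_le_one (by linarith)] at hr_le
    linarith
  -- μ ≤ n
  have hterm2 : ∀ i ∈ Finset.range r, psi μ (cnt n r i) ≤ (cnt n r i : ℝ)/μ := by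
    intro i hi
    unfold psi
    apply div_le_div_of_nonneg_left (Nat.cast_nonneg _) hμpos
    linarith [Nat.cast_nonneg (α := ℝ) (cnt n r i)]
  have hμn : μ ≤ n := by
    have := Finset.sum_le_sum hterm2
    rw [hgμ', ← Finset.sum_div, hcsum] at this
    rw [le_div_iff₀ hμpos] at this
    linarith
  -- lower bound n - q - 1 ≤ μ
  have hterm3 : ∀ i ∈ Finset.range r, (cnt n r i : ℝ)/(μ + ((n/r : ℕ) : ℝ) + 1)
      ≤ psi μ (cnt n r i) := by
    intro i hi
    unfold psi
    have hle : (cnt n r i : ℝ) ≤ ((n/r : ℕ) : ℝ) + 1 := by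
      exact_mod_cast cnt_le hr0 i (Finset.mem_range.mp hi)
    apply div_le_div_of_nonneg_left (Nat.cast_nonneg _) (by linarith [hc1' i hi])
    linarith
  have hlow : (n : ℝ) - ((n/r : ℕ) : ℝ) - 1 ≤ μ := by
    have := Finset.sum_le_sum hterm3
    rw [hgμ', ← Finset.sum_div, hcsum] at this
    rw [div_le_one (by linarith)] at this
    linarith
  exact ⟨μ, hgμ', hμpos, hμn, hlow⟩

lemma turan_lower {n r : ℕ} (hr : 0 < r) (hn : 0 < n) (μ : ℝ) (hμ : 0 < μ)
    (hg : 1 ≤ ∑ i ∈ Finset.range r, psi μ (cnt n r i)) :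
    μ ≤ specRad (turanGraph n r) := by
  classical
  have : Nonempty (Fin n) := ⟨⟨0, hn⟩⟩
  set T : ℕ → ℝ := fun k => (μ + (cnt n r k : ℝ))⁻¹ with hT
  have hden : ∀ k, (0:ℝ) < μ + (cnt n r k : ℝ) := fun k => by positivity
  have hTpos : ∀ k, 0 < T k := fun k => inv_pos.mpr (hden k)
  set S : ℝ := ∑ i ∈ Finset.range r, (cnt n r i : ℝ) * T i with hS
  have hgS : 1 ≤ S := by
    rw [hS]
    refine le_trans hg (le_of_eq (Finset.sum_congr rfl fun i _ => ?_))
    rw [psi, div_eq_mul_inv]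
  set z : Fin n → ℝ := fun v => T (↑v % r) with hz
  have hzpos : ∀ v, 0 < z v := fun v => hTpos _
  have hzne : z ≠ 0 := by
    intro h0
    have := hzpos ⟨0, hn⟩
    rw [h0] at this
    simp at this
  apply le_specRad (turanGraph n r) z hzne μ
  -- z ⬝ᵥ z
  have dzz : z ⬝ᵥ z = ∑ i ∈ Finset.range r, (cnt n r i : ℝ) * (T i * T i) :=
    fin_sum_mod hr (fun k => T k * T k)
  -- sum of z
  have dS : ∑ w : Fin n, z w = S := by
    rw [hS]
    exact fin_sum_mod hr T
  -- inner sums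
  have hinner : ∀ v : Fin n,
      (∑ w : Fin n, if (turanGraph n r).Adj v w then z v * z w else 0)
        = z v * (S - (cnt n r (↑v % r) : ℝ) * T (↑v % r)) := by
    intro v
    have e1 : ∀ w : Fin n, (if (turanGraph n r).Adj v w then z v * z w else 0)
        = z v * z w - (if (↑w % r : ℕ) = ↑v % r then z v * z w else 0) := by
      intro w
      have hadj : (turanGraph n r).Adj v w ↔ ¬ ((↑v % r : ℕ) = ↑w % r) := Iff.rfl
      by_cases hc : (↑w % r : ℕ) = ↑v % r
      · rw [if_pos hc, if_neg (by rw [hadj]; push_neg; exact hc.symm)]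
        ring
      · rw [if_neg hc, if_pos (by rw [hadj]; exact fun h => hc h.symm)]
        ring
    rw [Finset.sum_congr rfl (fun w _ => e1 w), Finset.sum_sub_distrib]
    have e2 : ∑ w : Fin n, z v * z w = z v * S := by
      rw [← Finset.mul_sum, dS]
    have e3 : (∑ w : Fin n, if (↑w % r : ℕ) = ↑v % r then z v * z w else 0)
        = z v * ((cnt n r (↑v % r) : ℝ) * T (↑v % r)) := by
      have e4 : (∑ w : Fin n, if (↑w % r : ℕ) = ↑v % r then z v * z w else 0)
          = z v * ∑ w : Fin n, (if (↑w % r : ℕ) = ↑v % r then T (↑w % r) else 0) := by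
        rw [Finset.mul_sum]
        refine Finset.sum_congr rfl fun w _ => ?_
        rw [mul_ite, mul_zero]
      rw [e4]
      congr 1
      rw [fin_sum_mod hr (fun k => if k = ↑v % r then T k else 0)]
      rw [Finset.sum_congr rfl (fun i _ => by rw [mul_ite, mul_zero])]
      rw [Finset.sum_ite_eq' (Finset.range r) (↑v % r) (fun i => (cnt n r i : ℝ) * T i)]
      rw [if_pos (Finset.mem_range.mpr (Nat.mod_lt _ hr))]
    rw [e2, e3]
    ring
  rw [Finset.sum_congr rfl (fun v _ => hinner v)]
  have douter : (∑ v : Fin n, z v * (S - (cnt n r (↑v % r) : ℝ) * T (↑v % r)))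
      = ∑ i ∈ Finset.range r, (cnt n r i : ℝ) * (T i * (S - (cnt n r i : ℝ) * T i)) :=
    fin_sum_mod hr (fun k => T k * (S - (cnt n r k : ℝ) * T k))
  rw [douter, dzz]
  have hterm : ∀ i ∈ Finset.range r,
      (cnt n r i : ℝ) * (T i * (S - (cnt n r i : ℝ) * T i))
        - μ * ((cnt n r i : ℝ) * (T i * T i))
      = (cnt n r i : ℝ) * T i * S - (cnt n r i : ℝ) * T i := by
    intro i _
    have hd := hden i
    rw [hT]
    field_simp
    ring
  have hsum : ∑ i ∈ Finset.range r, ((cnt n r i : ℝ) * (T i * (S - (cnt n r i : ℝ) * T i))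
      - μ * ((cnt n r i : ℝ) * (T i * T i)))
      = S * S - S := by
    rw [Finset.sum_congr rfl hterm, Finset.sum_sub_distrib, ← Finset.sum_mul, ← hS]
  have hfin : 0 ≤ S * S - S := by nlinarith [hgS]
  have hsplit : ∑ i ∈ Finset.range r, ((cnt n r i : ℝ) * (T i * (S - (cnt n r i : ℝ) * T i))
      - μ * ((cnt n r i : ℝ) * (T i * T i)))
      = (∑ i ∈ Finset.range r, (cnt n r i : ℝ) * (T i * (S - (cnt n r i : ℝ) * T i)))
        - ∑ i ∈ Finset.range r, μ * ((cnt n r i : ℝ) * (T i * T i)) := by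
    rw [Finset.sum_sub_distrib]
  have hμz : μ * ∑ i ∈ Finset.range r, (cnt n r i : ℝ) * (T i * T i)
      = ∑ i ∈ Finset.range r, μ * ((cnt n r i : ℝ) * (T i * T i)) := by
    rw [Finset.mul_sum]
  linarith [hsum, hfin, hsplit, hμz.ge, hμz.le]

lemma K_upper {n r : ℕ} (hn : 0 < n) (p : Fin n → Fin r) (f : Fin r → ℕ)
    (hp : ∀ i, (Finset.univ.filter (fun v => p v = i)).card = f i) (lam : ℝ) (hlam : 0 < lam)
    (hg : ∑ i : Fin r, psi lam (f i) ≤ 1) :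
    specRad ((⊤ : SimpleGraph (Fin r)).comap p) ≤ lam := by
  classical
  have : Nonempty (Fin n) := ⟨⟨0, hn⟩⟩
  set T : Fin r → ℝ := fun i => (lam + (f i : ℝ))⁻¹ with hT
  have hden : ∀ i, (0:ℝ) < lam + (f i : ℝ) := fun i => by positivity
  have hTpos : ∀ i, 0 < T i := fun i => inv_pos.mpr (hden i)
  set Sf : ℝ := ∑ i : Fin r, (f i : ℝ) * T i with hSf
  have hgS : Sf ≤ 1 := by
    refine le_trans (le_of_eq (Finset.sum_congr rfl fun i _ => ?_)) hg
    rw [psi, div_eq_mul_inv]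
  set y : Fin n → ℝ := fun v => T (p v) with hy
  apply specRad_le _ y (fun v => hTpos (p v)) lam
  intro v
  have e1 : ∀ w : Fin n, (if ((⊤ : SimpleGraph (Fin r)).comap p).Adj v w then y w else 0)
      = y w - (if p w = p v then y w else 0) := by
    intro w
    have hadj : ((⊤ : SimpleGraph (Fin r)).comap p).Adj v w ↔ p v ≠ p w := by
      simp [SimpleGraph.comap_adj]
    by_cases hc : p w = p v
    · rw [if_pos hc, if_neg (by rw [hadj]; push_neg; exact hc.symm)]
      ring
    · rw [if_neg hc, if_pos (by rw [hadj]; exact fun h => hc h.symm)]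
      ring
  rw [Finset.sum_congr rfl (fun w _ => e1 w), Finset.sum_sub_distrib]
  have e2 : ∑ w : Fin n, y w = Sf := by
    rw [hSf]
    exact fin_sum_fiber p f hp T
  have e3 : (∑ w : Fin n, if p w = p v then y w else 0) = (f (p v) : ℝ) * T (p v) := by
    have := fin_sum_fiber p f hp (fun i => if i = p v then T i else 0)
    rw [show (fun w : Fin n => if p w = p v then y w else 0)
        = fun w => if p w = p v then T (p w) else 0 from rfl] at *
    rw [this]
    rw [Finset.sum_congr rfl (fun i _ => by rw [mul_ite, mul_zero])]
    rw [Finset.sum_ite_eq' Finset.univ (p v) (fun i => (f i : ℝ) * T i)]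
    rw [if_pos (Finset.mem_univ _)]
  rw [e2, e3]
  have hTv : (lam + (f (p v) : ℝ)) * T (p v) = 1 := mul_inv_cancel₀ (hden (p v)).ne'
  have : Sf - (f (p v) : ℝ) * T (p v) ≤ 1 - (f (p v) : ℝ) * T (p v) := by linarith
  calc Sf - (f (p v) : ℝ) * T (p v) ≤ 1 - (f (p v) : ℝ) * T (p v) := this
  _ = lam * T (p v) := by linarith [hTv]
  _ = lam * y v := rfl

lemma gsum_lip {r : ℕ} (f : Fin r → ℕ) (lam μ : ℝ) (h0 : 0 < lam) (hle : lam ≤ μ) :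
    gsum f lam ≤ gsum f μ + (μ - lam) * (∑ i, (f i : ℝ)) / lam^2 := by
  have hterm : ∀ i ∈ Finset.univ (α := Fin r),
      psi lam (f i) ≤ psi μ (f i) + (μ - lam) * (f i : ℝ) / lam^2 := by
    intro i _
    set a : ℝ := (f i : ℝ) with ha
    have ha0 : 0 ≤ a := Nat.cast_nonneg _
    have hd1 : 0 < lam + a := by linarith
    have hd2 : 0 < μ + a := by linarith
    have key : a/(lam+a) - a/(μ+a) = a*(μ-lam)/((lam+a)*(μ+a)) := by
      field_simp
      ring
    have h2 : a*(μ-lam)/((lam+a)*(μ+a)) ≤ (μ-lam)*a/lam^2 := by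
      rw [show a*(μ-lam) = (μ-lam)*a from mul_comm a (μ-lam)]
      apply div_le_div_of_nonneg_left (mul_nonneg (by linarith) ha0) (by positivity)
      nlinarith
    show a/(lam+a) ≤ a/(μ+a) + (μ-lam)*a/lam^2
    linarith
  calc gsum f lam ≤ ∑ i, (psi μ (f i) + (μ - lam) * (f i : ℝ) / lam^2) :=
        Finset.sum_le_sum hterm
  _ = gsum f μ + (μ - lam) * (∑ i, (f i : ℝ)) / lam^2 := by
      rw [Finset.sum_add_distrib]
      congr 1
      rw [Finset.mul_sum, Finset.sum_div]

set_option maxHeartbeats 2000000 in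
theorem spectral_gap_unbalanced_multipartite (r : ℕ) (hr : 2 ≤ r) :
    ∃ γ : ℝ, 0 < γ ∧ ∃ N : ℕ, ∀ n ≥ N, ∀ f : Fin r → ℕ,
      (∀ i, 0 < f i) → (∀ i j : Fin r, i ≤ j → f j ≤ f i) →
      (∑ i, f i) = n →
      f ⟨r - 1, by omega⟩ + 2 ≤ f ⟨0, by omega⟩ →
      ∀ p : Fin n → Fin r, (∀ i, (univ.filter (fun v => p v = i)).card = f i) →
      γ / n ≤ specRad (turanGraph n r) - specRad ((⊤ : SimpleGraph (Fin r)).comap p) := by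
  refine ⟨1/8192, by norm_num, 32*r + 32, ?_⟩
  intro n hn f hfpos hfmono hfsum hgap p hp
  have hr0 : 0 < r := by omega
  have hn32 : 32 ≤ n := by omega
  have hrn : r ≤ n := by omega
  have hn0 : 0 < n := by omega
  have hnR : (32:ℝ) ≤ (n:ℝ) := by exact_mod_cast hn32
  have hnRpos : (0:ℝ) < (n:ℝ) := by linarith
  have : Nonempty (Fin n) := ⟨⟨0, hn0⟩⟩
  obtain ⟨μ, hgμ, hμpos, hμn, hμlow⟩ := exists_mu hr hrn
  have hq2 : ((n/r : ℕ) : ℝ) ≤ (n:ℝ)/2 := by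
    have h1 : n/r ≤ n/2 := Nat.div_le_div_left hr (by norm_num)
    calc ((n/r : ℕ) : ℝ) ≤ ((n/2 : ℕ) : ℝ) := by exact_mod_cast h1
    _ ≤ (n:ℝ)/2 := by
        have := Nat.cast_div_le (m := n) (n := 2) (α := ℝ)
        simpa using this
  have hμ4 : (n:ℝ)/4 ≤ μ := by linarith
  set γ : ℝ := 1/8192 with hγ
  set lam : ℝ := μ - γ/n with hlam
  have hγn : γ/(n:ℝ) ≤ 1 := by
    rw [div_le_one hnRpos]
    rw [hγ]
    linarith
  have hγnpos : 0 < γ/(n:ℝ) := by positivity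
  have hlam8 : (n:ℝ)/8 ≤ lam := by
    rw [hlam]
    linarith
  have hlam0 : 0 < lam := lt_of_lt_of_le (by linarith : (0:ℝ) < (n:ℝ)/8) hlam8
  -- Hbal value
  have hHbal : Hbal n r μ = 1 := by
    have hsumv : ∑ i : Fin r, cnt n r ↑i = n := by
      rw [Fin.sum_univ_eq_sum_range (fun i => cnt n r i) r]
      exact cnt_sum hr0 n
    have hbalv : ∀ i j : Fin r, cnt n r ↑i ≤ cnt n r ↑j + 1 := by
      intro i j
      rw [cnt_formula hr0 n ↑i i.isLt, cnt_formula hr0 n ↑j j.isLt]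
      split_ifs <;> omega
    have h1 := gsum_balanced hr0 (fun i : Fin r => cnt n r ↑i) hsumv hbalv μ
    have h2 : gsum (fun i : Fin r => cnt n r ↑i) μ
        = ∑ i ∈ Finset.range r, psi μ (cnt n r i) := by
      unfold gsum
      rw [Fin.sum_univ_eq_sum_range (fun i => psi μ (cnt n r i)) r]
    rw [← h1, h2, hgμ]
  -- gap for f
  have hne : (⟨r - 1, by omega⟩ : Fin r) ≠ ⟨0, by omega⟩ := by
    simp only [ne_eq, Fin.mk.injEq]
    omega
  have hgapf : gsum f μ + 2*μ^2/(μ + (n:ℝ))^4 ≤ 1 := by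
    have := gsum_gap hr0 f hfsum hne hgap μ hμpos
    rw [hHbal] at this
    exact this
  -- Lipschitz
  have hfsum' : (∑ i, (f i : ℝ)) = (n:ℝ) := by
    rw [← Nat.cast_sum, hfsum]
  have hlip : gsum f lam ≤ gsum f μ + (μ - lam) * (n:ℝ) / lam^2 := by
    have := gsum_lip f lam μ hlam0 (by rw [hlam]; linarith)
    rwa [hfsum'] at this
  -- numeric comparison
  have hnum : (μ - lam) * (n:ℝ) / lam^2 ≤ 2*μ^2/(μ + (n:ℝ))^4 := by
    have hml : μ - lam = γ/n := by rw [hlam]; ring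
    rw [hml]
    have e1 : γ/(n:ℝ) * (n:ℝ) / lam^2 = γ / lam^2 := by
      field_simp
    rw [e1]
    have h1 : γ/lam^2 ≤ γ/((n:ℝ)^2/64) := by
      apply div_le_div_of_nonneg_left (by rw [hγ]; norm_num) (by positivity)
      nlinarith
    have h2 : 2*((n:ℝ)^2/16)/(16*(n:ℝ)^4) ≤ 2*μ^2/(μ + (n:ℝ))^4 := by
      have ha2 : (μ + (n:ℝ))^2 ≤ 4*(n:ℝ)^2 := by nlinarith
      have hd4 : (μ + (n:ℝ))^4 ≤ 16*(n:ℝ)^4 := by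
        calc (μ + (n:ℝ))^4 = ((μ + (n:ℝ))^2)^2 := by ring
        _ ≤ (4*(n:ℝ)^2)^2 := pow_le_pow_left₀ (sq_nonneg _) ha2 2
        _ = 16*(n:ℝ)^4 := by ring
      have hnum2 : 2*((n:ℝ)^2/16) ≤ 2*μ^2 := by nlinarith [hμ4, hnRpos]
      have hdpos : (0:ℝ) < (μ + (n:ℝ))^4 := pow_pos (by linarith) 4
      exact div_le_div₀ (by positivity) hnum2 hdpos hd4
    have h3 : γ/((n:ℝ)^2/64) = 2*((n:ℝ)^2/16)/(16*(n:ℝ)^4) := by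
      rw [hγ]
      field_simp
      ring
    linarith
  have hKg : ∑ i : Fin r, psi lam (f i) ≤ 1 := by
    have : gsum f lam ≤ 1 := by linarith
    exact this
  have hK : specRad ((⊤ : SimpleGraph (Fin r)).comap p) ≤ lam :=
    K_upper hn0 p f hp lam hlam0 hKg
  have hT : μ ≤ specRad (turanGraph n r) :=
    turan_lower hr0 hn0 μ hμpos (le_of_eq hgμ.symm)
  have heq : γ/(n:ℝ) = μ - lam := by rw [hlam]; ring
  calc (1:ℝ)/8192/(n:ℝ) = μ - lam := heq
  _ ≤ specRad (turanGraph n r) - specRad ((⊤ : SimpleGraph (Fin r)).comap p) :=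
    sub_le_sub hT hK
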